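/- Let g(c, e, k) denote the number of simple graphs with c connected components and e edges on k labeled vertices. For every positive integer n and every k ≥ 1, ∑_{e=0}^{C(k,2)} ∑_{c=1}^{k} (-1)^e n^c g(c,e,k) = n(n-1)···(n-k+1). -/

import Mathlib

open Finset SimpleGraph Function

/-- Number of simple graphs with `c` connected components and `e` edges on `k`
labeled vertices. -/
noncomputable def gcount (c e k : ℕ) : ℕ :=
  Nat.card {G : SimpleGraph (Fin k) //
    Nat.card G.ConnectedComponent = c ∧ Nat.card G.edgeSet = e}

private lemma cast_descFactorial_eq_prod (n k : ℕ) :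
    ((n.descFactorial k : ℤ)) = ∏ j ∈ Finset.range k, ((n : ℤ) - j) := by
  rw [← descPochhammer_eval_eq_descFactorial ℤ n k]
  induction k with
  | zero => simp
  | succ k ih =>
    rw [descPochhammer_succ_right, Finset.prod_range_succ, ← ih]
    simp [Polynomial.eval_mul, Polynomial.eval_sub, Polynomial.eval_natCast]

private lemma compat_reachable {k n : ℕ} {G : SimpleGraph (Fin k)} {f : Fin k → Fin n}
    (h : ∀ v w, G.Adj v w → f v = f w) {v w : Fin k} (hr : G.Reachable v w) : f v = f w := by
  obtain ⟨p⟩ := hr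
  induction p with
  | nil => rfl
  | cons ha _ ih => exact (h _ _ ha).trans ih

private def colorEquiv {k n : ℕ} (G : SimpleGraph (Fin k)) :
    {f : Fin k → Fin n // ∀ v w, G.Adj v w → f v = f w} ≃ (G.ConnectedComponent → Fin n) where
  toFun f := Quot.lift f.1 fun _ _ hr => compat_reachable f.2 hr
  invFun g := ⟨fun v => g (G.connectedComponentMk v),
    fun v w h => congrArg g (ConnectedComponent.sound h.reachable)⟩
  left_inv f := rfl
  right_inv g := funext fun c => Quot.inductionOn c fun _ => rfl

private lemma card_compat {k n : ℕ} (G : SimpleGraph (Fin k)) :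
    Nat.card {f : Fin k → Fin n // ∀ v w, G.Adj v w → f v = f w}
      = n ^ Nat.card G.ConnectedComponent := by
  classical
  have : Finite G.ConnectedComponent := Quot.finite _
  have : Fintype G.ConnectedComponent := Fintype.ofFinite _
  rw [Nat.card_congr (colorEquiv G), Nat.card_eq_fintype_card, Nat.card_eq_fintype_card,
    Fintype.card_fun, Fintype.card_fin]

theorem stmt_8 (n k : ℕ) (hn : 1 ≤ n) (hk : 1 ≤ k) :
    ∑ e ∈ Finset.range (k.choose 2 + 1), ∑ c ∈ Finset.Icc 1 k,
        (-1 : ℤ) ^ e * (n : ℤ) ^ c * gcount c e k =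
      ∏ j ∈ Finset.range k, ((n : ℤ) - j) := by
  classical
  have hcardE : ∀ G : SimpleGraph (Fin k), Nat.card G.edgeSet = G.edgeFinset.card := by
    intro G
    rw [Nat.card_coe_set_eq, Set.ncard_eq_toFinset_card']
    unfold SimpleGraph.edgeFinset
    congr!
  have key : ∀ G : SimpleGraph (Fin k),
      (Nat.card G.edgeSet, Nat.card G.ConnectedComponent)
        ∈ Finset.range (k.choose 2 + 1) ×ˢ Finset.Icc 1 k := by
    intro G
    have : Finite G.ConnectedComponent := Quot.finite _
    refine Finset.mem_product.2 ⟨Finset.mem_range.2 ?_, Finset.mem_Icc.2 ⟨?_, ?_⟩⟩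
    · have h := G.card_edgeFinset_le_card_choose_two
      rw [hcardE]
      simp only [Fintype.card_fin] at h
      omega
    · have : Nonempty G.ConnectedComponent := ⟨G.connectedComponentMk ⟨0, hk⟩⟩
      exact Nat.card_pos
    · have hsurj : Function.Surjective (G.connectedComponentMk) := fun c => c.exists_rep
      calc Nat.card G.ConnectedComponent ≤ Nat.card (Fin k) :=
            Nat.card_le_card_of_surjective _ hsurj
        _ = k := Nat.card_eq_fintype_card.trans (Fintype.card_fin k)
  -- Step 1: rewrite as a sum over all graphs
  have h1 : (∑ e ∈ Finset.range (k.choose 2 + 1), ∑ c ∈ Finset.Icc 1 k,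
      (-1 : ℤ) ^ e * (n : ℤ) ^ c * gcount c e k)
      = ∑ G : SimpleGraph (Fin k),
        (-1 : ℤ) ^ (Nat.card G.edgeSet) * (n : ℤ) ^ (Nat.card G.ConnectedComponent) := by
    rw [← Finset.sum_product']
    rw [← Finset.sum_fiberwise_of_maps_to (g := fun G : SimpleGraph (Fin k) =>
      (Nat.card G.edgeSet, Nat.card G.ConnectedComponent)) (fun G _ => key G)]
    refine Finset.sum_congr rfl fun p _ => ?_
    have : ∀ G ∈ Finset.univ.filter (fun G : SimpleGraph (Fin k) =>
        (Nat.card G.edgeSet, Nat.card G.ConnectedComponent) = p),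
        (-1 : ℤ) ^ (Nat.card G.edgeSet) * (n : ℤ) ^ (Nat.card G.ConnectedComponent)
          = (-1 : ℤ) ^ p.1 * (n : ℤ) ^ p.2 := by
      intro G hG
      simp only [Finset.mem_filter, Prod.ext_iff] at hG
      rw [hG.2.1, hG.2.2]
    rw [Finset.sum_congr rfl this, Finset.sum_const, nsmul_eq_mul]
    have hg : (gcount p.2 p.1 k : ℤ) = ((Finset.univ.filter (fun G : SimpleGraph (Fin k) =>
        (Nat.card G.edgeSet, Nat.card G.ConnectedComponent) = p)).card : ℤ) := by
      congr 1
      rw [gcount, Nat.card_eq_fintype_card, Fintype.card_subtype]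
      congr 1
      ext G
      simp [Prod.ext_iff, and_comm]
    rw [hg]
    ring
  rw [h1]
  -- Step 2: expand n^c as a sum over colorings
  have h2 : ∀ G : SimpleGraph (Fin k),
      ((n : ℤ)) ^ (Nat.card G.ConnectedComponent)
        = ∑ f : Fin k → Fin n, if (∀ v w, G.Adj v w → f v = f w) then (1 : ℤ) else 0 := by
    intro G
    rw [Finset.sum_boole, ← Fintype.card_subtype, ← Nat.card_eq_fintype_card, card_compat]
    push_cast
    ring
  calc
    ∑ G : SimpleGraph (Fin k),
        (-1 : ℤ) ^ (Nat.card G.edgeSet) * (n : ℤ) ^ (Nat.card G.ConnectedComponent)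
      = ∑ f : Fin k → Fin n, ∑ G ∈ Finset.univ.filter
          (fun G : SimpleGraph (Fin k) => ∀ v w, G.Adj v w → f v = f w),
          (-1 : ℤ) ^ (Nat.card G.edgeSet) := by
        simp_rw [h2, Finset.mul_sum, mul_ite, mul_one, mul_zero]
        rw [Finset.sum_comm]
        refine Finset.sum_congr rfl fun f _ => ?_
        rw [Finset.sum_filter]
    _ = ∑ f : Fin k → Fin n, if Function.Injective f then (1 : ℤ) else 0 := by
        refine Finset.sum_congr rfl fun f _ => ?_
        set M : SimpleGraph (Fin k) :=
          { Adj := fun v w => v ≠ w ∧ f v = f w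
            symm := ⟨fun v w h => ⟨h.1.symm, h.2.symm⟩⟩
            loopless := ⟨fun v h => h.1 rfl⟩ } with hM
        have hfilter : Finset.univ.filter
            (fun G : SimpleGraph (Fin k) => ∀ v w, G.Adj v w → f v = f w)
            = Finset.univ.filter (fun G : SimpleGraph (Fin k) => G ≤ M) := by
          ext G
          simp only [Finset.mem_filter, Finset.mem_univ, true_and]
          constructor
          · intro h v w hadj
            exact ⟨hadj.ne, h v w hadj⟩
          · intro h v w hadj
            exact (h hadj).2
        rw [hfilter]
        have hsum : ∑ G ∈ Finset.univ.filter (fun G : SimpleGraph (Fin k) => G ≤ M),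
            (-1 : ℤ) ^ (Nat.card G.edgeSet)
            = ∑ S ∈ M.edgeFinset.powerset, (-1 : ℤ) ^ S.card := by
          refine Finset.sum_nbij' (i := fun G => G.edgeFinset)
            (j := fun S => SimpleGraph.fromEdgeSet ↑S) ?_ ?_ ?_ ?_ ?_
          · intro G hG
            simp only [Finset.mem_filter, Finset.mem_univ, true_and] at hG
            exact Finset.mem_powerset.2 (SimpleGraph.edgeFinset_mono hG)
          · intro S hS
            simp only [Finset.mem_powerset] at hS
            simp only [Finset.mem_filter, Finset.mem_univ, true_and]
            calc SimpleGraph.fromEdgeSet (↑S) ≤ SimpleGraph.fromEdgeSet M.edgeSet := by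
                  apply SimpleGraph.fromEdgeSet_mono
                  rw [← SimpleGraph.coe_edgeFinset]
                  exact_mod_cast hS
              _ = M := SimpleGraph.fromEdgeSet_edgeSet M
          · intro G hG
            simp [SimpleGraph.fromEdgeSet_edgeSet]
          · intro S hS
            simp only [Finset.mem_powerset] at hS
            apply Finset.coe_injective
            rw [SimpleGraph.coe_edgeFinset, SimpleGraph.edgeSet_fromEdgeSet]
            ext e
            simp only [Set.mem_diff, Set.mem_setOf_eq, Finset.mem_coe, and_iff_left_iff_imp]
            intro he
            exact M.not_isDiag_of_mem_edgeSet (SimpleGraph.mem_edgeFinset.1 (hS he))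
          · intro G hG
            rw [hcardE]
        rw [hsum, Finset.sum_powerset_neg_one_pow_card]
        have hMbot : (M.edgeFinset = ∅) ↔ Function.Injective f := by
          rw [SimpleGraph.edgeFinset_eq_empty]
          constructor
          · intro h v w hvw
            by_contra hne
            have hadj : M.Adj v w := ⟨hne, hvw⟩
            rw [h] at hadj
            exact hadj
          · intro hinj
            ext v w
            simp only [SimpleGraph.bot_adj, iff_false, hM]
            rintro ⟨hne, hfe⟩
            exact hne (hinj hfe)
        simp only [hMbot]
    _ = ((n.descFactorial k : ℤ)) := by
        rw [Finset.sum_boole]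
        rw [← Fintype.card_subtype]
        rw [Fintype.card_congr (Equiv.subtypeInjectiveEquivEmbedding (Fin k) (Fin n))]
        rw [Fintype.card_embedding_eq, Fintype.card_fin, Fintype.card_fin]
    _ = ∏ j ∈ Finset.range k, ((n : ℤ) - j) := cast_descFactorial_eq_prod n k
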